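/- Let A ∈ ℝ^{m×n}, c ∈ ℝᵐ, and let P be a symmetric matrix with (1−γ)I ⪯ P ⪯ I for some 0 ≤ γ < 1. Let x* minimize ‖Ax − c‖₂ and s* minimize ‖Ax − c‖_P. Then ‖A(s* − x*)‖₂² ≤ (γ/(1−γ)) · ‖Ax* − c‖₂² ≤ (γ/(1−γ)) ‖c‖₂². -/

import Mathlib

open Matrix

/-- If `(1−γ)I ⪯ P ⪯ I` with `0 ≤ γ < 1`, `x*` minimizes `‖Ax − c‖₂` and `s*` minimizes
`‖Ax − c‖_P`, then `‖A(s* − x*)‖₂² ≤ (γ/(1−γ))‖Ax* − c‖₂² ≤ (γ/(1−γ))‖c‖₂²`. -/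
theorem stmt13 {m n : ℕ} (A : Matrix (Fin m) (Fin n) ℝ) (c : Fin m → ℝ)
    (P : Matrix (Fin m) (Fin m) ℝ) (γ : ℝ) (hγ0 : 0 ≤ γ) (hγ1 : γ < 1)
    (hPsymm : P.IsSymm)
    (hPlow : (P - (1 - γ) • (1 : Matrix (Fin m) (Fin m) ℝ)).PosSemidef)
    (hPhigh : ((1 : Matrix (Fin m) (Fin m) ℝ) - P).PosSemidef)
    (xs ss : Fin n → ℝ)
    (hxs : ∀ x : Fin n → ℝ,
      (A *ᵥ xs - c) ⬝ᵥ (A *ᵥ xs - c) ≤ (A *ᵥ x - c) ⬝ᵥ (A *ᵥ x - c))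
    (hss : ∀ x : Fin n → ℝ,
      (A *ᵥ ss - c) ⬝ᵥ (P *ᵥ (A *ᵥ ss - c)) ≤ (A *ᵥ x - c) ⬝ᵥ (P *ᵥ (A *ᵥ x - c))) :
    (A *ᵥ (ss - xs)) ⬝ᵥ (A *ᵥ (ss - xs)) ≤
        γ / (1 - γ) * ((A *ᵥ xs - c) ⬝ᵥ (A *ᵥ xs - c)) ∧
      γ / (1 - γ) * ((A *ᵥ xs - c) ⬝ᵥ (A *ᵥ xs - c)) ≤ γ / (1 - γ) * (c ⬝ᵥ c) := by
  have hγ : 0 < 1 - γ := by linarith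
  set rx : Fin m → ℝ := A *ᵥ xs - c with hrx
  set rs : Fin m → ℝ := A *ᵥ ss - c with hrs
  -- orthogonality of rx to the range of A
  have horth : ∀ v : Fin n → ℝ, rx ⬝ᵥ (A *ᵥ v) = 0 := by
    intro v
    set a : ℝ := rx ⬝ᵥ (A *ᵥ v) with ha
    set b : ℝ := (A *ᵥ v) ⬝ᵥ (A *ᵥ v) with hb
    have hbnn : 0 ≤ b := by
      simp only [hb, dotProduct]
      exact Finset.sum_nonneg fun i _ => mul_self_nonneg _
    have hexp : ∀ t : ℝ, 0 ≤ 2 * t * a + t ^ 2 * b := by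
      intro t
      have := hxs (xs + t • v)
      have h1 : A *ᵥ (xs + t • v) - c = rx + t • (A *ᵥ v) := by
        rw [mulVec_add, mulVec_smul, hrx]; abel
      rw [h1] at this
      simp only [dotProduct_add, add_dotProduct, smul_dotProduct, dotProduct_smul,
        smul_eq_mul] at this
      have hcomm : (A *ᵥ v) ⬝ᵥ rx = a := by rw [ha, dotProduct_comm]
      rw [hcomm] at this
      nlinarith [this]
    have hT := hexp (-a / (b + 1))
    have hb1 : 0 < b + 1 := by linarith
    have h' : 0 ≤ (2 * (-a / (b + 1)) * a + (-a / (b + 1)) ^ 2 * b) * (b + 1) ^ 2 :=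
      mul_nonneg hT (sq_nonneg _)
    have heq : (2 * (-a / (b + 1)) * a + (-a / (b + 1)) ^ 2 * b) * (b + 1) ^ 2 =
        -(a ^ 2 * (b + 2)) := by
      field_simp
      ring
    rw [heq] at h'
    nlinarith [sq_nonneg a]
  -- Pythagorean identity
  have hAd : A *ᵥ (ss - xs) = rs - rx := by
    rw [mulVec_sub, hrs, hrx]; abel
  have hpyth : (A *ᵥ (ss - xs)) ⬝ᵥ (A *ᵥ (ss - xs)) = rs ⬝ᵥ rs - rx ⬝ᵥ rx := by
    have h0 : rx ⬝ᵥ rs = rx ⬝ᵥ rx := by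
      have := horth (ss - xs)
      rw [hAd, dotProduct_sub] at this
      linarith
    rw [hAd]
    simp only [dotProduct_sub, sub_dotProduct]
    rw [dotProduct_comm rs rx, h0]
    ring
  -- bounds from positive semidefiniteness
  have h1 : rs ⬝ᵥ (P *ᵥ rs) ≤ rx ⬝ᵥ (P *ᵥ rx) := hss xs
  have h2 : rx ⬝ᵥ (P *ᵥ rx) ≤ rx ⬝ᵥ rx := by
    have := hPhigh.dotProduct_mulVec_nonneg rx
    rw [star_trivial, sub_mulVec, one_mulVec, dotProduct_sub] at this
    linarith
  have h3 : (1 - γ) * (rs ⬝ᵥ rs) ≤ rs ⬝ᵥ (P *ᵥ rs) := by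
    have := hPlow.dotProduct_mulVec_nonneg rs
    rw [star_trivial, sub_mulVec, smul_mulVec, one_mulVec, dotProduct_sub,
      dotProduct_smul, smul_eq_mul] at this
    linarith
  have hrxnn : 0 ≤ rx ⬝ᵥ rx := by
    simp only [dotProduct]
    exact Finset.sum_nonneg fun i _ => mul_self_nonneg _
  constructor
  · rw [hpyth]
    rw [div_mul_eq_mul_div, le_div_iff₀ hγ]
    nlinarith
  · have hcc : rx ⬝ᵥ rx ≤ c ⬝ᵥ c := by
      have := hxs 0
      simpa [hrx] using this
    have : 0 ≤ γ / (1 - γ) := div_nonneg hγ0 (le_of_lt hγ)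
    exact mul_le_mul_of_nonneg_left hcc this
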